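/- Let M be a CC term and fr a name not occurring in program P. Then M is terminating (has a final reduct) under P if and only if there exists a term t such that M[fr:=t] is terminating under P. -/

import Mathlib

/-- Terms of continuation calculus: names (coded as naturals) and dot. -/
inductive Tm where
  | name : ℕ → Tm
  | dot : Tm → Tm → Tm
deriving DecidableEq

/-- Right-hand sides of rules: names, variables (de Bruijn-style indices
into the left-hand side's variable list), and dot. -/
inductive Rhs where
  | name : ℕ → Rhs
  | var : ℕ → Rhs
  | dot : Rhs → Rhs → Rhs
deriving DecidableEq

/-- A rule `n.x₁.⋯.xₖ → r`: head name, arity `k`, and right-hand side. -/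
structure Rule where
  head : ℕ
  arity : ℕ
  rhs : Rhs
deriving DecidableEq

/-- A program is a finite set of rules. -/
abbrev Program := Finset Rule

/-- Variables occurring in a right-hand side. -/
def Rhs.HasVar : Rhs → ℕ → Prop
  | .name _, _ => False
  | .var w, v => w = v
  | .dot a b, v => a.HasVar v ∨ b.HasVar v

/-- Well-formedness: every variable of a right-hand side occurs in the
left-hand side, and there is at most one rule per head name. -/
def Program.Wf (P : Program) : Prop :=
  (∀ r ∈ P, ∀ v, r.rhs.HasVar v → v < r.arity) ∧
  (∀ r₁ ∈ P, ∀ r₂ ∈ P, r₁.head = r₂.head → r₁ = r₂)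

/-- `n.t₁.⋯.tₖ` : left-associated application of a term to a list of terms. -/
def Tm.apps : Tm → List Tm → Tm
  | h, [] => h
  | h, t :: ts => Tm.apps (h.dot t) ts

/-- Instantiation of a right-hand side with the terms matched by the
left-hand side variables; fails if some variable is out of range. -/
def Rhs.inst (ts : List Tm) : Rhs → Option Tm
  | .name n => some (.name n)
  | .var v => ts[v]?
  | .dot a b => do pure (.dot (← a.inst ts) (← b.inst ts))

/-- One-step evaluation `M →_P N`. -/
def Step (P : Program) (M N : Tm) : Prop :=
  ∃ r ∈ P, ∃ ts : List Tm, ts.length = r.arity ∧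
    M = Tm.apps (.name r.head) ts ∧ r.rhs.inst ts = some N

/-- Multi-step evaluation `M →*_P N`. -/
def Steps (P : Program) : Tm → Tm → Prop := Relation.ReflTransGen (Step P)

/-- `M` is final: it has no successor. -/
def Final (P : Program) (M : Tm) : Prop := ¬ ∃ N, Step P M N

/-- `M` terminates: it evaluates to a final term. -/
def Terminates (P : Program) (M : Tm) : Prop := ∃ N, Steps P M N ∧ Final P N

/-- The name `m` occurs in a term. -/
def Tm.HasName (m : ℕ) : Tm → Prop
  | .name n => n = m
  | .dot a b => a.HasName m ∨ b.HasName m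

/-- The name `m` occurs in a right-hand side. -/
def Rhs.HasName (m : ℕ) : Rhs → Prop
  | .name n => n = m
  | .var _ => False
  | .dot a b => a.HasName m ∨ b.HasName m

/-- The name `m` occurs (is mentioned) in a program. -/
def Program.HasName (P : Program) (m : ℕ) : Prop :=
  ∃ r ∈ P, r.head = m ∨ r.rhs.HasName m

/-- The name `m` is defined by the program (is the head of some rule). -/
def Program.Defines (P : Program) (m : ℕ) : Prop :=
  ∃ r ∈ P, r.head = m

/-- Substitution of a term for a name, `M[fr := t]`. -/
def Tm.subName (m : ℕ) (t : Tm) : Tm → Tm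
  | .name n => if n = m then t else .name n
  | .dot a b => .dot (Tm.subName m t a) (Tm.subName m t b)

/-- Common reduct relation `M =_P N`. -/
def CommonRed (P : Program) (M N : Tm) : Prop :=
  ∃ t, Steps P M t ∧ Steps P N t

/-- Observational equivalence `M ≈_P N`. -/
def ObsEq (P : Program) (M N : Tm) : Prop :=
  ∀ P' : Program, P'.Wf → P ⊆ P' →
    ∀ X : Tm, (Terminates P' (X.dot M) ↔ Terminates P' (X.dot N))

/-- Renaming of names in a term. -/
def Tm.rename (f : ℕ → ℕ) : Tm → Tm
  | .name n => .name (f n)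
  | .dot a b => .dot (a.rename f) (b.rename f)

/-- Renaming of names in a right-hand side. -/
def Rhs.rename (f : ℕ → ℕ) : Rhs → Rhs
  | .name n => .name (f n)
  | .var v => .var v
  | .dot a b => .dot (a.rename f) (b.rename f)

/-- Renaming of names in a rule. -/
def Rule.rename (f : ℕ → ℕ) (r : Rule) : Rule :=
  ⟨f r.head, r.arity, r.rhs.rename f⟩

/-- Renaming of names in a program. -/
def Program.rename (f : ℕ → ℕ) (P : Program) : Program :=
  P.image (Rule.rename f)

/-- The fresh substitution `[n⃗ := m⃗]` as a function on names. -/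
def renFun (ns ms : List ℕ) (n : ℕ) : ℕ :=
  ((ns.zip ms).lookup n).getD n

/-- `M` has arity `k` under `P`: `M = n.q₁.⋯.qᵢ` where `n` has a rule of
arity `i + k`. -/
def Tm.ArityIs (P : Program) (M : Tm) (k : ℕ) : Prop :=
  ∃ r ∈ P, ∃ ts : List Tm, M = Tm.apps (.name r.head) ts ∧ ts.length + k = r.arity

lemma subName_self (fr : ℕ) (M : Tm) : Tm.subName fr (.name fr) M = M := by
  induction M with
  | name n => by_cases h : n = fr <;> simp [Tm.subName, h]
  | dot a b iha ihb => simp [Tm.subName, iha, ihb]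

/-- Head name of the spine. -/
def Tm.hd : Tm → ℕ
  | .name n => n
  | .dot a _ => a.hd

/-- Arguments of the spine. -/
def Tm.ar : Tm → List Tm
  | .name _ => []
  | .dot a b => a.ar ++ [b]

lemma hd_apps (ts : List Tm) : ∀ h : Tm, (Tm.apps h ts).hd = h.hd := by
  induction ts with
  | nil => intro h; rfl
  | cons t ts ih => intro h; simp [Tm.apps, ih, Tm.hd]

lemma ar_apps (ts : List Tm) : ∀ h : Tm, (Tm.apps h ts).ar = h.ar ++ ts := by
  induction ts with
  | nil => intro h; simp [Tm.apps, Tm.ar]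
  | cons t ts ih => intro h; simp [Tm.apps, ih, Tm.ar]

lemma subName_apps (m : ℕ) (t : Tm) (ts : List Tm) :
    ∀ h : Tm, Tm.subName m t (Tm.apps h ts)
      = Tm.apps (Tm.subName m t h) (ts.map (Tm.subName m t)) := by
  induction ts with
  | nil => intro h; rfl
  | cons u ts ih => intro h; simp [Tm.apps, ih, Tm.subName]

lemma inst_map (fr : ℕ) (t : Tm) (ts : List Tm) (r : Rhs) (hr : ¬ r.HasName fr) :
    r.inst (ts.map (Tm.subName fr t)) = (r.inst ts).map (Tm.subName fr t) := by
  induction r with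
  | name n =>
    have hn : n ≠ fr := hr
    simp [Rhs.inst, Tm.subName, hn]
  | var v => simp [Rhs.inst, List.getElem?_map]
  | dot a b iha ihb =>
    have ha : ¬ a.HasName fr := fun h => hr (Or.inl h)
    have hb : ¬ b.HasName fr := fun h => hr (Or.inr h)
    cases hia : a.inst ts <;> cases hib : b.inst ts <;>
      simp [Rhs.inst, iha ha, ihb hb, hia, hib, Tm.subName]

lemma step_subst {P : Program} {fr : ℕ} (hfr : ¬ P.HasName fr) (t : Tm) {M N : Tm}
    (h : Step P M N) : Step P (Tm.subName fr t M) (Tm.subName fr t N) := by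
  obtain ⟨r, hr, ts, hlen, hM, hN⟩ := h
  have hhead : r.head ≠ fr := fun he => hfr ⟨r, hr, Or.inl he⟩
  have hrhs : ¬ r.rhs.HasName fr := fun he => hfr ⟨r, hr, Or.inr he⟩
  refine ⟨r, hr, ts.map (Tm.subName fr t), by simp [hlen], ?_, ?_⟩
  · subst hM; rw [subName_apps]; simp [Tm.subName, hhead]
  · rw [inst_map fr t ts r.rhs hrhs, hN, Option.map_some]

lemma step_det {P : Program} (hP : P.Wf) {M N₁ N₂ : Tm}
    (h1 : Step P M N₁) (h2 : Step P M N₂) : N₁ = N₂ := by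
  obtain ⟨r1, hr1, ts1, _, hM1, hN1⟩ := h1
  obtain ⟨r2, hr2, ts2, _, hM2, hN2⟩ := h2
  have hM : Tm.apps (.name r1.head) ts1 = Tm.apps (.name r2.head) ts2 :=
    hM1.symm.trans hM2
  have hh : r1.head = r2.head := by
    have := congrArg Tm.hd hM
    simpa [hd_apps, Tm.hd] using this
  have hr : r1 = r2 := hP.2 r1 hr1 r2 hr2 hh
  subst hr
  have hts : ts1 = ts2 := by
    have := congrArg Tm.ar hM
    simpa [ar_apps, Tm.ar] using this
  subst hts
  rw [hN1] at hN2
  exact Option.some.inj hN2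

theorem terminates_iff_exists_subst_terminates (P : Program) (hP : P.Wf) (fr : ℕ)
    (hfr : ¬ P.HasName fr) (M : Tm) :
    Terminates P M ↔ ∃ t : Tm, Terminates P (Tm.subName fr t M) := by
  constructor
  · intro h
    exact ⟨.name fr, by rwa [subName_self]⟩
  · rintro ⟨t, F, hsteps, hfin⟩
    have key : ∀ X : Tm, Steps P X F →
        ∀ M : Tm, X = Tm.subName fr t M → Terminates P M := by
      intro X hX
      induction hX using Relation.ReflTransGen.head_induction_on with
      | refl =>
        intro M hM
        refine ⟨M, Relation.ReflTransGen.refl, ?_⟩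
        rintro ⟨N, hN⟩
        exact hfin ⟨_, hM ▸ step_subst hfr t hN⟩
      | head hstep _ ih =>
        intro M hM
        by_cases hMf : Final P M
        · exact ⟨M, Relation.ReflTransGen.refl, hMf⟩
        · obtain ⟨N, hN⟩ := not_not.mp hMf
          subst hM
          have hc := step_det hP hstep (step_subst hfr t hN)
          obtain ⟨G, hG, hGf⟩ := ih N hc
          exact ⟨G, Relation.ReflTransGen.head hN hG, hGf⟩
    exact key _ hsteps M rfl
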